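/- Let q(x,ξ) be a positive definite quadratic form on ℝ^{2m}, q(x,ξ) = (1/2)⟨Q(x,ξ),(x,ξ)⟩ with Q symmetric positive definite. Then there exist 0 < r₁ ≤ r₂ ≤ ... ≤ r_m < ∞ and a linear symplectic transformation T such that q(T(x,ξ)) = Σ_{j=1}^m r_j^{-2}(x_j² + ξ_j²). Moreover the numbers r_j are uniquely determined. -/

import Mathlib

open Matrix

open Polynomial


variable {m : ℕ}

/-- symmetric matrices with equal quadratic forms are equal -/
lemma w_quadform_eq {n : Type*} [Fintype n] [DecidableEq n]
    {M N : Matrix n n ℝ} (hM : M.IsSymm) (hN : N.IsSymm)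
    (h : ∀ v : n → ℝ, M.mulVec v ⬝ᵥ v = N.mulVec v ⬝ᵥ v) : M = N := by
  ext i j
  have key : ∀ (P : Matrix n n ℝ) (i j : n),
      P.mulVec (Pi.single i 1 + Pi.single j 1) ⬝ᵥ (Pi.single i 1 + Pi.single j 1)
        = P i i + P i j + P j i + P j j := by
    intro P i j
    simp [mulVec_add, dotProduct_add, add_dotProduct, mulVec_single, dotProduct_single]
    ring
  have hd : ∀ i : n, M i i = N i i := by
    intro i
    have := h (Pi.single i 1)
    simpa [mulVec_single, dotProduct_single] using this
  have h2 := h (Pi.single i 1 + Pi.single j 1)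
  rw [key M, key N] at h2
  have hMs : M j i = M i j := by
    have := congrFun (congrFun hM i) j; simpa [Matrix.transpose_apply] using this
  have hNs : N j i = N i j := by
    have := congrFun (congrFun hN i) j; simpa [Matrix.transpose_apply] using this
  have := hd i; have := hd j
  linarith


lemma w_det_tJ_sub_diag {m : ℕ} (d : Fin m → ℝ) (hd : ∀ j, d j ≠ 0) (t : ℝ) :
    (t • Matrix.J (Fin m) ℝ - diagonal (Sum.elim d d)).det = ∏ j, (t ^ 2 + d j ^ 2) := by
  classical
  have hsub : t • Matrix.J (Fin m) ℝ - diagonal (Sum.elim d d)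
      = fromBlocks (-(diagonal d)) (-(t • (1 : Matrix (Fin m) (Fin m) ℝ))) (t • 1)
          (-(diagonal d)) := by
    ext i j
    rcases i with i | i <;> rcases j with j | j <;>
      by_cases h : i = j <;>
      simp [Matrix.J, fromBlocks, diagonal_apply, Matrix.one_apply, h, Matrix.smul_apply]
  rw [hsub]
  have hdetd : (∏ j, d j) ≠ 0 := Finset.prod_ne_zero_iff.mpr fun j _ => hd j
  have hdet : IsUnit (-(diagonal d)).det := by
    rw [det_neg, det_diagonal]
    exact (isUnit_iff_ne_zero.mpr (by positivity)).mul (isUnit_iff_ne_zero.mpr hdetd)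
  have : Invertible (-(diagonal d)) := (-(diagonal d)).invertibleOfIsUnitDet hdet
  rw [det_fromBlocks₁₁, invOf_eq_nonsing_inv]
  have hinv : (-(diagonal d))⁻¹ = -(diagonal (fun j => (d j)⁻¹)) := by
    apply Matrix.inv_eq_right_inv
    rw [Matrix.mul_neg, Matrix.neg_mul, neg_neg, diagonal_mul_diagonal]
    ext i j
    by_cases h : i = j <;> simp [h, diagonal_apply, mul_inv_cancel₀ (hd _), Matrix.one_apply]
  rw [hinv]
  have hmid : (-(diagonal d)) - (t • (1 : Matrix (Fin m) (Fin m) ℝ)) *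
      (-(diagonal (fun j => (d j)⁻¹))) * (-(t • (1 : Matrix (Fin m) (Fin m) ℝ)))
      = -(diagonal (fun j => d j + t ^ 2 * (d j)⁻¹)) := by
    ext i j
    by_cases h : i = j <;>
      simp [h, Matrix.mul_apply, diagonal_apply, Matrix.one_apply, Matrix.smul_apply,
        Finset.sum_ite_eq, sub_eq_add_neg]
    ring
  rw [hmid, det_neg, det_neg, det_diagonal, det_diagonal]
  have hcard : ((-1 : ℝ) ^ Fintype.card (Fin m) * (-1) ^ Fintype.card (Fin m)) = 1 := by
    rw [← pow_add]; exact Even.neg_one_pow (Even.add_self _)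
  have hprod : (∏ j, d j) * (∏ j, (d j + t ^ 2 * (d j)⁻¹)) = ∏ j, (t ^ 2 + d j ^ 2) := by
    rw [← Finset.prod_mul_distrib]
    apply Finset.prod_congr rfl
    intro j _
    rw [mul_add]
    rw [mul_comm (d j) (t ^ 2 * (d j)⁻¹), mul_assoc, inv_mul_cancel₀ (hd j)]
    ring
  calc ((-1 : ℝ) ^ Fintype.card (Fin m) * ∏ j, d j) * ((-1) ^ Fintype.card (Fin m)
        * ∏ j, (d j + t ^ 2 * (d j)⁻¹))
      = ((-1 : ℝ) ^ Fintype.card (Fin m) * (-1) ^ Fintype.card (Fin m)) *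
        ((∏ j, d j) * (∏ j, (d j + t ^ 2 * (d j)⁻¹))) := by ring
    _ = ∏ j, (t ^ 2 + d j ^ 2) := by rw [hcard, hprod, one_mul]


variable {m : ℕ}

noncomputable def wD (r : Fin m → ℝ) : Matrix (Fin m ⊕ Fin m) (Fin m ⊕ Fin m) ℝ :=
  diagonal (Sum.elim (fun j => 2 * ((r j) ^ 2)⁻¹) (fun j => 2 * ((r j) ^ 2)⁻¹))

lemma w_det_sq (T : Matrix (Fin m ⊕ Fin m) (Fin m ⊕ Fin m) ℝ)
    (hsymp : Tᵀ * Matrix.J (Fin m) ℝ * T = Matrix.J (Fin m) ℝ) :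
    T.det * T.det = 1 := by
  have h := congrArg Matrix.det hsymp
  rw [det_mul, det_mul, det_transpose] at h
  have hJ := Matrix.isUnit_det_J (Fin m) ℝ
  rcases hJ with ⟨u, hu⟩
  have : T.det * T.det * (Matrix.J (Fin m) ℝ).det = 1 * (Matrix.J (Fin m) ℝ).det := by
    linear_combination h
  have hne : (Matrix.J (Fin m) ℝ).det ≠ 0 := by
    rw [← hu]; exact u.ne_zero
  exact mul_right_cancel₀ hne this

lemma w_det_tJ_sub (Q T : Matrix (Fin m ⊕ Fin m) (Fin m ⊕ Fin m) ℝ) (r : Fin m → ℝ)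
    (hr : ∀ j, 0 < r j)
    (hsymp : Tᵀ * Matrix.J (Fin m) ℝ * T = Matrix.J (Fin m) ℝ)
    (hQT : Tᵀ * Q * T = wD r) (t : ℝ) :
    (t • Matrix.J (Fin m) ℝ - Q).det = ∏ j, (t ^ 2 + (2 * ((r j) ^ 2)⁻¹) ^ 2) := by
  have hTs := w_det_sq T hsymp
  have key : Tᵀ * (t • Matrix.J (Fin m) ℝ - Q) * T
      = t • Matrix.J (Fin m) ℝ - wD r := by
    rw [Matrix.mul_sub, Matrix.sub_mul, Matrix.mul_smul, Matrix.smul_mul, hsymp, hQT]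
  have hdet := congrArg Matrix.det key
  rw [det_mul, det_mul, det_transpose] at hdet
  have : (t • Matrix.J (Fin m) ℝ - Q).det
      = (t • Matrix.J (Fin m) ℝ - wD r).det := by
    linear_combination hdet - (t • Matrix.J (Fin m) ℝ - Q).det * hTs
  rw [this, wD]
  exact w_det_tJ_sub_diag (fun j => 2 * ((r j) ^ 2)⁻¹)
    (fun j => by have := hr j; positivity) t

lemma w_bridge (Q T : Matrix (Fin m ⊕ Fin m) (Fin m ⊕ Fin m) ℝ) (r : Fin m → ℝ)
    (hQsymm : Q.IsSymm)
    (hq : ∀ v : (Fin m ⊕ Fin m) → ℝ,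
      (1 / 2) * (Q.mulVec (T.mulVec v) ⬝ᵥ T.mulVec v)
        = ∑ j, ((r j) ^ 2)⁻¹ * ((v (Sum.inl j)) ^ 2 + (v (Sum.inr j)) ^ 2)) :
    Tᵀ * Q * T = wD r := by
  apply w_quadform_eq
  · show (Tᵀ * Q * T)ᵀ = Tᵀ * Q * T
    rw [Matrix.transpose_mul, Matrix.transpose_mul, Matrix.transpose_transpose,
      hQsymm.eq, Matrix.mul_assoc]
  · show (wD r)ᵀ = wD r
    rw [wD, diagonal_transpose]
  · intro v
    have hlhs : (Tᵀ * Q * T).mulVec v ⬝ᵥ v = Q.mulVec (T.mulVec v) ⬝ᵥ T.mulVec v := by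
      rw [← Matrix.mulVec_mulVec, ← Matrix.mulVec_mulVec]
      rw [Matrix.mulVec_transpose]
      rw [dotProduct_comm, Matrix.dotProduct_mulVec]
      exact dotProduct_comm _ _
    have hrhs : (wD r).mulVec v ⬝ᵥ v
        = ∑ j, (2 * ((r j) ^ 2)⁻¹) * ((v (Sum.inl j)) ^ 2 + (v (Sum.inr j)) ^ 2) := by
      rw [wD, dotProduct]
      simp only [Matrix.mulVec_diagonal]
      rw [Fintype.sum_sum_type, ← Finset.sum_add_distrib]
      apply Finset.sum_congr rfl
      intro j _
      simp only [Sum.elim_inl, Sum.elim_inr]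
      ring
    rw [hlhs, hrhs]
    have := hq v
    have h2 := congrArg (fun x => 2 * x) this
    rw [← mul_assoc] at h2
    norm_num at h2
    rw [← Matrix.mulVec_mulVec] at h2
    rw [h2, Finset.mul_sum]
    apply Finset.sum_congr rfl
    intro j _
    ring


lemma w_monotone_eq_of_multiset_eq {m : ℕ} {r r' : Fin m → ℝ}
    (hr : Monotone r) (hr' : Monotone r')
    (h : Finset.univ.val.map r = Finset.univ.val.map r') : r = r' := by
  rw [Fin.univ_val_map, Fin.univ_val_map, Multiset.coe_eq_coe] at h
  have := List.Perm.eq_of_sortedLE (hr.sortedLE_ofFn) (hr'.sortedLE_ofFn) h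
  rw [List.ofFn_inj] at this
  exact this

lemma w_multiset_eq_of_prod_eq' {m : ℕ} (a a' : Fin m → ℝ)
    (h : ∀ t : ℝ, 0 ≤ t → ∏ j, (t + a j) = ∏ j, (t + a' j)) :
    Finset.univ.val.map a = Finset.univ.val.map a' := by
  have key : ∀ b : Fin m → ℝ,
      (∏ j, ((X : ℝ[X]) - C (- b j))) = ((Finset.univ.val.map fun j => - b j).map
        (fun c => (X : ℝ[X]) - C c)).prod := by
    intro b
    rw [Multiset.map_map]
    rfl
  have hP : (∏ j, ((X : ℝ[X]) - C (- a j))) = (∏ j, ((X : ℝ[X]) - C (- a' j))) := by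
    apply Polynomial.eq_of_infinite_eval_eq
    apply Set.Infinite.mono (s := Set.Ici (0 : ℝ))
    · intro t ht
      simp only [Set.mem_setOf_eq, eval_prod, eval_sub, eval_X, eval_C, sub_neg_eq_add]
      exact h t ht
    · exact Set.Ici_infinite 0
  have hroots := congrArg Polynomial.roots hP
  rw [key a, key a', roots_multiset_prod_X_sub_C, roots_multiset_prod_X_sub_C] at hroots
  have := congrArg (Multiset.map (fun x : ℝ => -x)) hroots
  rw [Multiset.map_map, Multiset.map_map] at this
  simpa using this

lemma w_unique {m : ℕ} (Q T T' : Matrix (Fin m ⊕ Fin m) (Fin m ⊕ Fin m) ℝ)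
    (r r' : Fin m → ℝ) (hQsymm : Q.IsSymm)
    (hr : ∀ j, 0 < r j) (hmono : Monotone r)
    (hsymp : Tᵀ * Matrix.J (Fin m) ℝ * T = Matrix.J (Fin m) ℝ)
    (hQT : Tᵀ * Q * T = wD r)
    (hr' : ∀ j, 0 < r' j) (hmono' : Monotone r')
    (hsymp' : T'ᵀ * Matrix.J (Fin m) ℝ * T' = Matrix.J (Fin m) ℝ)
    (hQT' : T'ᵀ * Q * T' = wD r') : r' = r := by
  have hdets : ∀ t : ℝ, (∏ j, (t ^ 2 + (2 * ((r j) ^ 2)⁻¹) ^ 2))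
      = ∏ j, (t ^ 2 + (2 * ((r' j) ^ 2)⁻¹) ^ 2) := by
    intro t
    rw [← w_det_tJ_sub Q T r hr hsymp hQT t, ← w_det_tJ_sub Q T' r' hr' hsymp' hQT' t]
  have hms := w_multiset_eq_of_prod_eq' (fun j => (2 * ((r j) ^ 2)⁻¹) ^ 2)
      (fun j => (2 * ((r' j) ^ 2)⁻¹) ^ 2) ?_
  · set g : ℝ → ℝ := fun x => Real.sqrt (2 / Real.sqrt x) with hg
    have hmr := congrArg (Multiset.map g) hms
    rw [Multiset.map_map, Multiset.map_map] at hmr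
    have hgr : ∀ (s : Fin m → ℝ), (∀ j, 0 < s j) →
        (g ∘ fun j => (2 * ((s j) ^ 2)⁻¹) ^ 2) = s := by
      intro s hs
      funext j
      have h1 : (0:ℝ) < 2 * ((s j) ^ 2)⁻¹ := by have := hs j; positivity
      simp only [Function.comp_apply, hg]
      rw [Real.sqrt_sq h1.le]
      have h2 : 2 / (2 * ((s j) ^ 2)⁻¹) = (s j) ^ 2 := by
        field_simp
      rw [h2, Real.sqrt_sq (hs j).le]
    rw [hgr r hr, hgr r' hr'] at hmr
    exact (w_monotone_eq_of_multiset_eq hmono' hmono hmr.symm)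
  · intro t ht
    have := hdets (Real.sqrt t)
    rwa [Real.sq_sqrt ht] at this


variable {n : Type*} [Fintype n] [DecidableEq n]

lemma w_star_dot_re (x y : n → ℂ) :
    (star x ⬝ᵥ y).re = (fun i => (x i).re) ⬝ᵥ (fun i => (y i).re)
      + (fun i => (x i).im) ⬝ᵥ (fun i => (y i).im) := by
  simp only [dotProduct, Pi.star_apply, Complex.re_sum, ← Finset.sum_add_distrib]
  apply Finset.sum_congr rfl
  intro i _
  simp [Complex.mul_re]

lemma w_star_dot_im (x y : n → ℂ) :
    (star x ⬝ᵥ y).im = (fun i => (x i).re) ⬝ᵥ (fun i => (y i).im)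
      - (fun i => (x i).im) ⬝ᵥ (fun i => (y i).re) := by
  simp only [dotProduct, Pi.star_apply, Complex.im_sum, ← Finset.sum_sub_distrib]
  apply Finset.sum_congr rfl
  intro i _
  simp [Complex.mul_im]
  ring

lemma w_dot_re (x y : n → ℂ) :
    (x ⬝ᵥ y).re = (fun i => (x i).re) ⬝ᵥ (fun i => (y i).re)
      - (fun i => (x i).im) ⬝ᵥ (fun i => (y i).im) := by
  simp only [dotProduct, Complex.re_sum, ← Finset.sum_sub_distrib]
  apply Finset.sum_congr rfl
  intro i _
  simp [Complex.mul_re]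

lemma w_dot_im (x y : n → ℂ) :
    (x ⬝ᵥ y).im = (fun i => (x i).re) ⬝ᵥ (fun i => (y i).im)
      + (fun i => (x i).im) ⬝ᵥ (fun i => (y i).re) := by
  simp only [dotProduct, Complex.im_sum, ← Finset.sum_add_distrib]
  apply Finset.sum_congr rfl
  intro i _
  simp [Complex.mul_im]

lemma w_mulVec_map_re (A : Matrix n n ℝ) (x : n → ℂ) (i : n) :
    ((A.map (fun t => (t : ℂ)) *ᵥ x) i).re = (A *ᵥ (fun k => (x k).re)) i := by
  simp only [Matrix.mulVec, dotProduct, Complex.re_sum, Matrix.map_apply]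
  apply Finset.sum_congr rfl
  intro k _
  simp [Complex.mul_re]

lemma w_mulVec_map_im (A : Matrix n n ℝ) (x : n → ℂ) (i : n) :
    ((A.map (fun t => (t : ℂ)) *ᵥ x) i).im = (A *ᵥ (fun k => (x k).im)) i := by
  simp only [Matrix.mulVec, dotProduct, Complex.im_sum, Matrix.map_apply]
  apply Finset.sum_congr rfl
  intro k _
  simp [Complex.mul_im]

lemma w_herm_orth (H : Matrix n n ℂ) (hH : H.IsHermitian) (x y : n → ℂ) (α β : ℝ)
    (hx : H *ᵥ x = (α : ℂ) • x) (hy : H *ᵥ y = (β : ℂ) • y) (hab : α ≠ β) :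
    star x ⬝ᵥ y = 0 := by
  have h1 : star x ⬝ᵥ (H *ᵥ y) = (β : ℂ) * (star x ⬝ᵥ y) := by
    rw [hy, dotProduct_smul]; simp
  have h2 : star x ⬝ᵥ (H *ᵥ y) = (α : ℂ) * (star x ⬝ᵥ y) := by
    rw [Matrix.dotProduct_mulVec]
    have : star x ᵥ* H = (α : ℂ) • star x := by
      have hsm : star (H *ᵥ x) = star x ᵥ* Hᴴ := Matrix.star_mulVec H x
      rw [hH.eq] at hsm
      rw [← hsm, hx, star_smul]
      simp
    rw [this, smul_dotProduct]
    simp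
  have h3 : ((α : ℂ) - β) * (star x ⬝ᵥ y) = 0 := by
    rw [sub_mul, ← h1, ← h2, sub_self]
  rcases mul_eq_zero.mp h3 with h | h
  · exact absurd (by exact_mod_cast sub_eq_zero.mp h) hab
  · exact h

lemma w_mulVec_star (H : Matrix n n ℂ) (hconj : H.map (starRingEnd ℂ) = -H) (x : n → ℂ) :
    H *ᵥ (star x) = - star (H *ᵥ x) := by
  funext i
  have hc : ∀ i k, (starRingEnd ℂ) (H i k) = - H i k := by
    intro i k
    have := congrFun (congrFun hconj i) k
    simpa [Matrix.map_apply] using this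
  simp only [Matrix.mulVec, dotProduct, Pi.star_apply, Pi.neg_apply, star_sum]
  rw [← Finset.sum_neg_distrib]
  apply Finset.sum_congr rfl
  intro k _
  have : star (H i k) = - H i k := hc i k
  rw [star_mul', this]
  ring


variable {n : Type*} [Fintype n] [DecidableEq n]

lemma w_charmatrix_eq {R : Type*} [CommRing R]
    (M : Matrix n n R) : charmatrix M = (X : R[X]) • (1 : Matrix n n R[X]) - M.map C := by
  ext i j
  by_cases h : i = j <;> simp [h, charmatrix_apply, Matrix.one_apply, diagonal_apply]

lemma w_charpoly_conj {R : Type*} [CommRing R]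
    (P M Q : Matrix n n R) (hPQ : P * Q = 1) (hQP : Q * P = 1) :
    (P * M * Q).charpoly = M.charpoly := by
  have hmap : (P.map C) * (Q.map C) = 1 := by
    rw [← Matrix.map_mul, hPQ]; simp
  have hc : charmatrix (P * M * Q) = (P.map C) * charmatrix M * (Q.map C) := by
    rw [w_charmatrix_eq, w_charmatrix_eq]
    rw [Matrix.mul_sub, Matrix.sub_mul]
    congr 1
    · rw [Matrix.mul_smul, Matrix.mul_one, Matrix.smul_mul, hmap]
    · rw [Matrix.map_mul, Matrix.map_mul]
  unfold Matrix.charpoly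
  rw [hc, det_mul, det_mul]
  have : (P.map C).det * (Q.map C).det = 1 := by
    rw [← det_mul, hmap, det_one]
  calc (P.map C).det * (charmatrix M).det * (Q.map C).det
      = (P.map C).det * (Q.map C).det * (charmatrix M).det := by ring
    _ = (charmatrix M).det := by rw [this, one_mul]

lemma w_charpoly_diagonal {R : Type*} [CommRing R]
    (d : n → R) : (diagonal d).charpoly = ∏ i, (X - C (d i)) := by
  unfold Matrix.charpoly
  have : charmatrix (diagonal d) = diagonal (fun i => (X : R[X]) - C (d i)) := by
    ext i j
    by_cases h : i = j <;> simp [h, charmatrix_apply, diagonal_apply]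
  rw [this, det_diagonal]

lemma w_eigen_count (H : Matrix n n ℂ) (hH : H.IsHermitian)
    (hconj : H.map (starRingEnd ℂ) = -H) (hev : ∀ i, hH.eigenvalues i ≠ 0) :
    2 * (Finset.univ.filter (fun i => 0 < hH.eigenvalues i)).card = Fintype.card n := by
  set ev := hH.eigenvalues with hevdef
  set U := (hH.eigenvectorUnitary : Matrix n n ℂ) with hUdef
  have hU1 : U * star U = 1 := by
    have := hH.eigenvectorUnitary.2
    rw [Matrix.mem_unitaryGroup_iff] at this
    exact this
  have hU2 : star U * U = 1 := by
    have := hH.eigenvectorUnitary.2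
    rw [Matrix.mem_unitaryGroup_iff'] at this
    exact this
  have hspec : H = U * diagonal (RCLike.ofReal ∘ hH.eigenvalues) * star U := hH.spectral_theorem
  have hp1 : H.charpoly = ∏ i, ((X : ℂ[X]) - C ((ev i : ℂ))) := by
    rw [hspec, w_charpoly_conj U _ (star U) hU1 hU2, w_charpoly_diagonal]
    rfl
  have hp2 : (-H).charpoly = ∏ i, ((X : ℂ[X]) - C (-(ev i : ℂ))) := by
    have hnegspec : -H = U * (-(diagonal (RCLike.ofReal ∘ ev))) * star U := by
      rw [Matrix.mul_neg, Matrix.neg_mul, ← hspec]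
    rw [hnegspec, w_charpoly_conj U _ (star U) hU1 hU2]
    have : (-(diagonal (RCLike.ofReal ∘ ev : n → ℂ))) = diagonal (fun i => -(ev i : ℂ)) := by
      rw [← diagonal_neg]
      rfl
    rw [this, w_charpoly_diagonal]
  have hp3 : (-H).charpoly = ∏ i, ((X : ℂ[X]) - C ((ev i : ℂ))) := by
    rw [← hconj, Matrix.charpoly_map, hp1, Polynomial.map_prod]
    apply Finset.prod_congr rfl
    intro i _
    rw [Polynomial.map_sub, map_X, map_C, Complex.conj_ofReal]
  have hpq : (∏ i, ((X : ℂ[X]) - C ((ev i : ℂ)))) = ∏ i, ((X : ℂ[X]) - C (-(ev i : ℂ))) := by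
    rw [← hp3, hp2]
  -- multiset of roots
  have key : ∀ b : n → ℂ,
      (∏ i, ((X : ℂ[X]) - C (b i))) = ((Finset.univ.val.map b).map
        (fun c => (X : ℂ[X]) - C c)).prod := by
    intro b
    rw [Multiset.map_map]
    rfl
  have hroots := congrArg Polynomial.roots hpq
  rw [key (fun i => (ev i : ℂ)), key (fun i => -(ev i : ℂ)),
    roots_multiset_prod_X_sub_C, roots_multiset_prod_X_sub_C] at hroots
  have hre := congrArg (Multiset.map Complex.re) hroots
  rw [Multiset.map_map, Multiset.map_map] at hre
  have hs : Finset.univ.val.map ev = Finset.univ.val.map (fun i => - ev i) := by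
    convert hre using 2 <;> simp
  -- counting
  have hcount := congrArg (Multiset.countP (fun x : ℝ => 0 < x)) hs
  rw [Multiset.countP_map, Multiset.countP_map] at hcount
  have hposneg : (Finset.univ.filter (fun i => 0 < ev i)).card
      = (Finset.univ.filter (fun i => ev i < 0)).card := by
    have l1 : (Finset.univ.filter (fun i => 0 < ev i)).card
        = Multiset.card (Finset.univ.val.filter (fun i => 0 < ev i)) := rfl
    have l2 : (Finset.univ.filter (fun i => ev i < 0)).card
        = Multiset.card (Finset.univ.val.filter (fun i => ev i < 0)) := rfl
    have e : (Finset.univ.val.filter (fun a => 0 < - ev a))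
        = Finset.univ.val.filter (fun i => ev i < 0) :=
      Multiset.filter_congr (fun x _ => by simp [neg_pos])
    rw [e] at hcount
    rw [l1, l2]
    exact hcount
  have hsplit := Finset.card_filter_add_card_filter_not
    (s := (Finset.univ : Finset n)) (fun i => 0 < ev i)
  have hnegfilter : (Finset.univ.filter (fun i => ¬ 0 < ev i))
      = (Finset.univ.filter (fun i => ev i < 0)) := by
    apply Finset.filter_congr
    intro i _
    constructor
    · intro h; exact lt_of_le_of_ne (not_lt.mp h) (hev i)
    · intro h; exact not_lt.mpr h.le
  rw [hnegfilter, ← hposneg] at hsplit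
  rw [Finset.card_univ] at hsplit
  omega

lemma w_exists {m : ℕ} (Q : Matrix (Fin m ⊕ Fin m) (Fin m ⊕ Fin m) ℝ)
    (hsymm : Q.IsSymm) (hpos : Q.PosDef) :
    ∃ (r : Fin m → ℝ) (T : Matrix (Fin m ⊕ Fin m) (Fin m ⊕ Fin m) ℝ),
      (∀ j, 0 < r j) ∧ Monotone r ∧
      Tᵀ * Matrix.J (Fin m) ℝ * T = Matrix.J (Fin m) ℝ ∧
      Tᵀ * Q * T = wD r := by
  classical
  have hQps := hpos.posSemidef
  set S := (open scoped MatrixOrder in CFC.sqrt Q) with hSdef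
  have hSps : S.PosSemidef := (open scoped MatrixOrder in Matrix.nonneg_iff_posSemidef.mp (CFC.sqrt_nonneg Q))
  have hSsym : Sᵀ = S := by
    have h := hSps.isHermitian
    ext i j
    have h2 := congrFun (congrFun h j) i
    rw [Matrix.conjTranspose_apply, star_trivial] at h2
    rw [Matrix.transpose_apply]
    exact h2.symm
  have hSS : S * S = Q := (open scoped MatrixOrder in CFC.sqrt_mul_sqrt_self Q hQps.nonneg)
  have hdetQ : Q.det ≠ 0 := ne_of_gt hpos.det_pos
  have hdetS : IsUnit S.det := by
    refine isUnit_iff_ne_zero.mpr (fun h => hdetQ ?_)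
    rw [← hSS, det_mul, h, zero_mul]
  set Si := S⁻¹ with hSidef
  have hSSi : S * Si = 1 := Matrix.mul_nonsing_inv S hdetS
  have hSiS : Si * S = 1 := Matrix.nonsing_inv_mul S hdetS
  have hSisym : Siᵀ = Si := by rw [hSidef, Matrix.transpose_nonsing_inv, hSsym]
  have hdetSi : Si.det ≠ 0 := by
    intro h
    have := congrArg Matrix.det hSiS
    rw [det_mul, h, zero_mul, det_one] at this
    exact zero_ne_one this
  set A := Si * Matrix.J (Fin m) ℝ * Si with hAdef
  have hJt : (Matrix.J (Fin m) ℝ)ᵀ = - Matrix.J (Fin m) ℝ := Matrix.J_transpose _ _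
  have hAskew : Aᵀ = -A := by
    rw [hAdef, Matrix.transpose_mul, Matrix.transpose_mul, hJt, hSisym]
    simp only [Matrix.neg_mul, Matrix.mul_neg, Matrix.mul_assoc]
  have hAskew' : ∀ i k, A k i = - A i k := by
    intro i k
    have := congrFun (congrFun hAskew i) k
    simpa [Matrix.transpose_apply] using this
  have hdetJ : (Matrix.J (Fin m) ℝ).det ≠ 0 := by
    intro h
    have := Matrix.J_det_mul_J_det (Fin m) ℝ
    rw [h, zero_mul] at this
    exact zero_ne_one this
  have hdetA : A.det ≠ 0 := by
    rw [hAdef, det_mul, det_mul]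
    exact mul_ne_zero (mul_ne_zero hdetSi hdetJ) hdetSi
  -- complexification
  set Ac : Matrix (Fin m ⊕ Fin m) (Fin m ⊕ Fin m) ℂ := A.map (fun t => (t : ℂ)) with hAcdef
  set H := Complex.I • Ac with hHdef
  have hH_apply : ∀ i k, H i k = Complex.I * (A i k : ℂ) := by
    intro i k; simp [hHdef, hAcdef, Matrix.smul_apply, Matrix.map_apply]
  have hH : H.IsHermitian := by
    rw [Matrix.IsHermitian]
    ext i k
    rw [Matrix.conjTranspose_apply, hH_apply, hH_apply]
    have h := hAskew' i k
    rw [star_mul', Complex.star_def, Complex.conj_I, Complex.conj_ofReal, h]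
    push_cast
    ring
  have hconj : H.map (starRingEnd ℂ) = -H := by
    ext i k
    rw [Matrix.map_apply, hH_apply, Matrix.neg_apply, hH_apply]
    rw [_root_.map_mul, Complex.conj_I, Complex.conj_ofReal]
    ring
  have hdetH : IsUnit H.det := by
    rw [hHdef, Matrix.det_smul]
    have hAc : Ac.det = (A.det : ℂ) := by
      rw [hAcdef]
      exact (RingHom.map_det Complex.ofRealHom A).symm
    rw [hAc]
    refine isUnit_iff_ne_zero.mpr (mul_ne_zero (pow_ne_zero _ Complex.I_ne_zero) ?_)
    exact_mod_cast hdetA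
  set ev := hH.eigenvalues with hevdef
  set wv : (Fin m ⊕ Fin m) → (Fin m ⊕ Fin m) → ℂ := fun i => ⇑(hH.eigenvectorBasis i) with hwvdef
  have hHw : ∀ i, H *ᵥ wv i = (ev i : ℂ) • wv i := by
    intro i
    have h := hH.mulVec_eigenvectorBasis i
    rw [hwvdef]
    rw [h]
    funext k
    simp [Complex.real_smul, hevdef]
  have horth : ∀ i k, star (wv i) ⬝ᵥ wv k = if i = k then 1 else 0 := by
    intro i k
    have h := hH.eigenvectorBasis.orthonormal
    rw [orthonormal_iff_ite] at h
    have h2 := h i k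
    rw [EuclideanSpace.inner_eq_star_dotProduct] at h2
    rw [dotProduct_comm]; exact h2
  have hev0 : ∀ i, ev i ≠ 0 := by
    intro i h0
    have h1 := hHw i
    rw [h0] at h1
    simp only [Complex.ofReal_zero, zero_smul] at h1
    have h2 : wv i = 0 := by
      have h3 := congrArg (fun x => H⁻¹ *ᵥ x) h1
      simpa [Matrix.mulVec_mulVec, Matrix.nonsing_inv_mul H hdetH] using h3
    exact hH.eigenvectorBasis.orthonormal.ne_zero i (PiLp.ext fun k => by simpa using congrFun h2 k)
  -- counting
  have hcard : (Finset.univ.filter (fun i => 0 < ev i)).card = m := by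
    have h := w_eigen_count H hH hconj hev0
    rw [← hevdef] at h
    rw [Fintype.card_sum, Fintype.card_fin] at h
    omega
  have e := Finset.equivFinOfCardEq hcard
  set f : Fin m → ℝ := fun j => ev ((e.symm j) : Fin m ⊕ Fin m) with hfdef
  set τ := Tuple.sort f with hτdef
  set σ : Fin m → Fin m ⊕ Fin m := fun j => ((e.symm (τ j)) : Fin m ⊕ Fin m) with hσdef
  have hσinj : Function.Injective σ := by
    intro x y h
    rw [hσdef] at h
    exact τ.injective (e.symm.injective (Subtype.coe_injective h))
  have hσpos : ∀ j, 0 < ev (σ j) := by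
    intro j
    have := (e.symm (τ j)).2
    rw [Finset.mem_filter] at this
    exact this.2
  have hσmono : Monotone (fun j => ev (σ j)) := Tuple.monotone_sort f
  set μ : Fin m → ℝ := fun j => ev (σ j) with hμdef
  set r : Fin m → ℝ := fun j => Real.sqrt (2 * μ j) with hrdef
  have hrpos : ∀ j, 0 < r j := by
    intro j
    rw [hrdef]
    exact Real.sqrt_pos.mpr (by have := hσpos j; simp only [hμdef]; linarith)
  have hrsq : ∀ j, r j ^ 2 = 2 * μ j := by
    intro j
    rw [hrdef]
    exact Real.sq_sqrt (by have := hσpos j; simp only [hμdef]; linarith)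
  have hrmono : Monotone r := by
    intro x y hxy
    exact Real.sqrt_le_sqrt (by have := hσmono hxy; simp only [hμdef] at *; linarith)
  -- eigen equations for real and imaginary parts
  have hAc2 : ∀ j, Ac *ᵥ wv (σ j) = ((-Complex.I) * (μ j : ℂ)) • wv (σ j) := by
    intro j
    have h1 := hHw (σ j)
    rw [hHdef, Matrix.smul_mulVec] at h1
    have h2 := congrArg (fun x => (-Complex.I) • x) h1
    simp only [smul_smul] at h2
    rw [show (-Complex.I) * Complex.I = 1 by simp [Complex.I_mul_I]] at h2
    rw [one_smul] at h2
    rw [h2]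
  have hAa : ∀ j, A *ᵥ (fun i => (wv (σ j) i).re) = μ j • (fun i => (wv (σ j) i).im) := by
    intro j
    funext i
    have h1 := congrArg Complex.re (congrFun (hAc2 j) i)
    rw [w_mulVec_map_re] at h1
    rw [h1]
    simp [Pi.smul_apply, Complex.mul_re, Complex.mul_im, smul_eq_mul]
  have hAb : ∀ j, A *ᵥ (fun i => (wv (σ j) i).im) = (-(μ j)) • (fun i => (wv (σ j) i).re) := by
    intro j
    funext i
    have h1 := congrArg Complex.im (congrFun (hAc2 j) i)
    rw [w_mulVec_map_im] at h1
    rw [h1]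
    simp [Pi.smul_apply, Complex.mul_re, Complex.mul_im, smul_eq_mul]
  -- orthogonality relations
  have horth2 : ∀ j k, (wv (σ j)) ⬝ᵥ (wv (σ k)) = 0 := by
    intro j k
    have hx : H *ᵥ star (wv (σ j)) = ((-(μ j) : ℝ) : ℂ) • star (wv (σ j)) := by
      rw [w_mulVec_star H hconj, hHw (σ j), star_smul]
      rw [Complex.star_def, Complex.conj_ofReal]
      rw [← neg_smul]
      push_cast
      rfl
    have h := w_herm_orth H hH (star (wv (σ j))) (wv (σ k)) (-(μ j)) (μ k) hx (hHw (σ k))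
      (by have := hσpos j; have := hσpos k; simp only [hμdef] at *; intro hc; linarith [hc ▸ this])
    simpa using h
  have hkey : ∀ j k, ((fun i => (wv (σ j) i).re) ⬝ᵥ (fun i => (wv (σ k) i).re)
        = (if j = k then (1:ℝ) else 0)/2)
      ∧ ((fun i => (wv (σ j) i).im) ⬝ᵥ (fun i => (wv (σ k) i).im)
        = (if j = k then (1:ℝ) else 0)/2)
      ∧ ((fun i => (wv (σ j) i).re) ⬝ᵥ (fun i => (wv (σ k) i).im) = 0)
      ∧ ((fun i => (wv (σ j) i).im) ⬝ᵥ (fun i => (wv (σ k) i).re) = 0) := by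
    intro j k
    have hd : star (wv (σ j)) ⬝ᵥ wv (σ k) = if j = k then 1 else 0 := by
      rw [horth (σ j) (σ k)]
      by_cases h : j = k
      · simp [h]
      · rw [if_neg h, if_neg (fun hh => h (hσinj hh))]
    have h2 := horth2 j k
    have e1 := congrArg Complex.re hd
    rw [w_star_dot_re] at e1
    have e2 := congrArg Complex.im hd
    rw [w_star_dot_im] at e2
    have e3 := congrArg Complex.re h2
    rw [w_dot_re] at e3
    have e4 := congrArg Complex.im h2
    rw [w_dot_im] at e4
    simp only [Complex.zero_re, Complex.zero_im, apply_ite Complex.re, apply_ite Complex.im,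
      Complex.one_re, Complex.one_im] at e1 e2 e3 e4
    by_cases h : j = k
    · simp only [h, if_true] at e1 e2 e3 e4 ⊢
      refine ⟨by linarith, by linarith, by linarith, by linarith⟩
    · simp only [h, if_false] at e1 e2 e3 e4 ⊢
      refine ⟨by linarith, by linarith, by linarith, by linarith⟩
  set cv : Fin m → ℝ := fun j => Real.sqrt (2 / μ j) with hcvdef
  have hcsq : ∀ j, cv j ^ 2 = 2 / μ j := by
    intro j
    rw [hcvdef]
    exact Real.sq_sqrt (by have := hσpos j; positivity)
  set Pm : Matrix (Fin m ⊕ Fin m) (Fin m ⊕ Fin m) ℝ :=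
    Matrix.of (fun i β => Sum.elim (fun j => cv j * (wv (σ j) i).re)
      (fun j => cv j * (wv (σ j) i).im) β) with hPmdef
  have hcol_l : ∀ k, (fun i => Pm i (Sum.inl k)) = cv k • (fun i => (wv (σ k) i).re) := by
    intro k; funext i; simp [hPmdef, Matrix.of_apply]
  have hcol_r : ∀ k, (fun i => Pm i (Sum.inr k)) = cv k • (fun i => (wv (σ k) i).im) := by
    intro k; funext i; simp [hPmdef, Matrix.of_apply]
  have hentry : ∀ (X B Y : Matrix (Fin m ⊕ Fin m) (Fin m ⊕ Fin m) ℝ) (α β : Fin m ⊕ Fin m),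
      (Xᵀ * B * Y) α β = (fun i => X i α) ⬝ᵥ (B *ᵥ (fun i => Y i β)) := by
    intro X B Y α β
    rw [Matrix.mul_assoc, Matrix.mul_apply]
    rw [dotProduct]
    apply Finset.sum_congr rfl
    intro i _
    rw [Matrix.transpose_apply, Matrix.mul_apply, Matrix.mulVec, dotProduct]
  have hJll : ∀ j k, Matrix.J (Fin m) ℝ (Sum.inl j) (Sum.inl k) = 0 := by
    intro j k; simp [Matrix.J, Matrix.fromBlocks]
  have hJrr : ∀ j k, Matrix.J (Fin m) ℝ (Sum.inr j) (Sum.inr k) = 0 := by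
    intro j k; simp [Matrix.J, Matrix.fromBlocks]
  have hJlr : ∀ j k, Matrix.J (Fin m) ℝ (Sum.inl j) (Sum.inr k)
      = if j = k then -1 else 0 := by
    intro j k
    simp only [Matrix.J, Matrix.fromBlocks, Matrix.of_apply, Sum.elim_inl, Sum.elim_inr,
      Matrix.neg_apply, Matrix.one_apply]
    split_ifs <;> simp
  have hJrl : ∀ j k, Matrix.J (Fin m) ℝ (Sum.inr j) (Sum.inl k)
      = if j = k then 1 else 0 := by
    intro j k
    simp [Matrix.J, Matrix.fromBlocks, Matrix.one_apply]
  have hμne : ∀ j, μ j ≠ 0 := fun j => ne_of_gt (hσpos j)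
  have hc2' : ∀ j, cv j ^ 2 * μ j = 2 := by
    intro j
    rw [hcsq j, div_mul_cancel₀ _ (hμne j)]
  set T := Si * Pm with hTdef
  refine ⟨r, T, hrpos, hrmono, ?_, ?_⟩
  · -- symplectic
    have hred : Tᵀ * Matrix.J (Fin m) ℝ * T = Pmᵀ * A * Pm := by
      rw [hTdef, Matrix.transpose_mul, hSisym, hAdef]
      simp only [Matrix.mul_assoc]
    rw [hred]
    ext α β
    rw [hentry]
    rcases α with j | j <;> rcases β with k | k
    · rw [hcol_l, hcol_l, Matrix.mulVec_smul, hAa, hJll]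
      simp only [smul_dotProduct, dotProduct_smul, smul_eq_mul]
      rw [(hkey j k).2.2.1]
      ring
    · rw [hcol_l, hcol_r, Matrix.mulVec_smul, hAb, hJlr]
      simp only [smul_dotProduct, dotProduct_smul, smul_eq_mul]
      rw [(hkey j k).1]
      by_cases h : j = k
      · subst h
        simp only [eq_self_iff_true, if_true]
        linear_combination (-(1:ℝ)/2) * hc2' j
      · simp only [if_neg h]
        ring
    · rw [hcol_r, hcol_l, Matrix.mulVec_smul, hAa, hJrl]
      simp only [smul_dotProduct, dotProduct_smul, smul_eq_mul]
      rw [(hkey j k).2.1]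
      by_cases h : j = k
      · subst h
        simp only [eq_self_iff_true, if_true]
        linear_combination ((1:ℝ)/2) * hc2' j
      · simp only [if_neg h]
        ring
    · rw [hcol_r, hcol_r, Matrix.mulVec_smul, hAb, hJrr]
      simp only [smul_dotProduct, dotProduct_smul, smul_eq_mul]
      rw [(hkey j k).2.2.2]
      ring
  · -- diagonalization
    have hSiQSi : Si * Q * Si = 1 := by
      rw [← hSS, Matrix.mul_assoc, Matrix.mul_assoc S S Si, hSSi, Matrix.mul_one, hSiS]
    have hred : Tᵀ * Q * T = Pmᵀ * 1 * Pm := by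
      rw [hTdef, Matrix.transpose_mul, hSisym]
      rw [show Pmᵀ * Si * Q * (Si * Pm) = Pmᵀ * (Si * Q * Si) * Pm by
        simp only [Matrix.mul_assoc]]
      rw [hSiQSi]
    rw [hred]
    have hwd_ll : ∀ j k, wD r (Sum.inl j) (Sum.inl k)
        = if j = k then 2 * ((r j) ^ 2)⁻¹ else 0 := by
      intro j k
      rw [wD]
      by_cases h : j = k
      · subst h; simp
      · rw [Matrix.diagonal_apply_ne _ (by simp [h])]
        rw [if_neg h]
    have hwd_rr : ∀ j k, wD r (Sum.inr j) (Sum.inr k)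
        = if j = k then 2 * ((r j) ^ 2)⁻¹ else 0 := by
      intro j k
      rw [wD]
      by_cases h : j = k
      · subst h; simp
      · rw [Matrix.diagonal_apply_ne _ (by simp [h])]
        rw [if_neg h]
    have hwd_lr : ∀ j k, wD r (Sum.inl j) (Sum.inr k) = 0 := by
      intro j k
      rw [wD, Matrix.diagonal_apply_ne _ (by simp)]
    have hwd_rl : ∀ j k, wD r (Sum.inr j) (Sum.inl k) = 0 := by
      intro j k
      rw [wD, Matrix.diagonal_apply_ne _ (by simp)]
    have hnum : ∀ j, cv j * (cv j * (1 / 2)) = 2 * ((r j) ^ 2)⁻¹ := by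
      intro j
      rw [hrsq j]
      have h1 : (2 * μ j)⁻¹ = (2:ℝ)⁻¹ * (μ j)⁻¹ := by
        rw [mul_inv]
      rw [h1]
      have h2 : cv j * (cv j * (1/2)) = cv j ^ 2 / 2 := by ring
      rw [h2, hcsq j]
      field_simp
    ext α β
    rw [hentry, Matrix.one_mulVec]
    rcases α with j | j <;> rcases β with k | k
    · rw [hcol_l, hcol_l, hwd_ll]
      simp only [smul_dotProduct, dotProduct_smul, smul_eq_mul]
      rw [(hkey j k).1]
      by_cases h : j = k
      · subst h
        simp only [eq_self_iff_true, if_true]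
        exact hnum j
      · simp only [if_neg h]
        ring
    · rw [hcol_l, hcol_r, hwd_lr]
      simp only [smul_dotProduct, dotProduct_smul, smul_eq_mul]
      rw [(hkey j k).2.2.1]
      ring
    · rw [hcol_r, hcol_l, hwd_rl]
      simp only [smul_dotProduct, dotProduct_smul, smul_eq_mul]
      rw [(hkey j k).2.2.2]
      ring
    · rw [hcol_r, hcol_r, hwd_rr]
      simp only [smul_dotProduct, dotProduct_smul, smul_eq_mul]
      rw [(hkey j k).2.1]
      by_cases h : j = k
      · subst h
        simp only [eq_self_iff_true, if_true]
        exact hnum j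
      · simp only [if_neg h]
        ring
lemma w_quad_lhs {m : ℕ} (Q T : Matrix (Fin m ⊕ Fin m) (Fin m ⊕ Fin m) ℝ)
    (v : (Fin m ⊕ Fin m) → ℝ) :
    (Tᵀ * Q * T).mulVec v ⬝ᵥ v = Q.mulVec (T.mulVec v) ⬝ᵥ T.mulVec v := by
  rw [← Matrix.mulVec_mulVec, ← Matrix.mulVec_mulVec]
  rw [Matrix.mulVec_transpose]
  rw [dotProduct_comm, Matrix.dotProduct_mulVec]
  exact dotProduct_comm _ _

lemma w_quad_rhs {m : ℕ} (r : Fin m → ℝ) (v : (Fin m ⊕ Fin m) → ℝ) :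
    (wD r).mulVec v ⬝ᵥ v
      = ∑ j, (2 * ((r j) ^ 2)⁻¹) * ((v (Sum.inl j)) ^ 2 + (v (Sum.inr j)) ^ 2) := by
  rw [wD, dotProduct]
  simp only [Matrix.mulVec_diagonal]
  rw [Fintype.sum_sum_type, ← Finset.sum_add_distrib]
  apply Finset.sum_congr rfl
  intro j _
  simp only [Sum.elim_inl, Sum.elim_inr]
  ring


/-- Williamson's theorem: a positive definite quadratic form `q(x,ξ) = ½⟨Q(x,ξ),(x,ξ)⟩`
on `ℝ^{2m}` can be brought by a linear symplectic transformation `T` to the normal form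
`Σ_j r_j⁻²(x_j² + ξ_j²)` with `0 < r₁ ≤ ... ≤ r_m`, and the numbers `r_j` are uniquely
determined. -/
theorem williamson (m : ℕ) (Q : Matrix (Fin m ⊕ Fin m) (Fin m ⊕ Fin m) ℝ)
    (hsymm : Q.IsSymm) (hpos : Q.PosDef) :
    ∃ (r : Fin m → ℝ) (T : Matrix (Fin m ⊕ Fin m) (Fin m ⊕ Fin m) ℝ),
      (∀ j, 0 < r j) ∧ Monotone r ∧
      Tᵀ * Matrix.J (Fin m) ℝ * T = Matrix.J (Fin m) ℝ ∧
      (∀ v : (Fin m ⊕ Fin m) → ℝ,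
        (1 / 2) * (Q.mulVec (T.mulVec v) ⬝ᵥ T.mulVec v)
          = ∑ j, ((r j) ^ 2)⁻¹ * ((v (Sum.inl j)) ^ 2 + (v (Sum.inr j)) ^ 2)) ∧
      (∀ (r' : Fin m → ℝ) (T' : Matrix (Fin m ⊕ Fin m) (Fin m ⊕ Fin m) ℝ),
        (∀ j, 0 < r' j) → Monotone r' →
        T'ᵀ * Matrix.J (Fin m) ℝ * T' = Matrix.J (Fin m) ℝ →
        (∀ v : (Fin m ⊕ Fin m) → ℝ,
          (1 / 2) * (Q.mulVec (T'.mulVec v) ⬝ᵥ T'.mulVec v)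
            = ∑ j, ((r' j) ^ 2)⁻¹ * ((v (Sum.inl j)) ^ 2 + (v (Sum.inr j)) ^ 2)) →
        r' = r) := by
  obtain ⟨r, T, hrpos, hrmono, hsymp, hQT⟩ := w_exists Q hsymm hpos
  refine ⟨r, T, hrpos, hrmono, hsymp, ?_, ?_⟩
  · intro v
    have h1 : Q.mulVec (T.mulVec v) ⬝ᵥ T.mulVec v
        = ∑ j, (2 * ((r j) ^ 2)⁻¹) * ((v (Sum.inl j)) ^ 2 + (v (Sum.inr j)) ^ 2) := by
      rw [← w_quad_lhs, hQT, w_quad_rhs]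
    rw [h1, Finset.mul_sum]
    apply Finset.sum_congr rfl
    intro j _
    ring
  · intro r' T' hr' hmono' hsymp' hq'
    have hQT' := w_bridge Q T' r' hsymm hq'
    exact w_unique Q T T' r r' hsymm hrpos hrmono hsymp hQT hr' hmono' hsymp' hQT'
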